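/- arXiv:2102.06104 — 4 statements merged into one kernel-verified Lean document; each statement's English description precedes it below -/
import Mathlib

section
/- For every abelian map ψ on a group G and every n ≥ 1, the map ψ_n satisfies ψ_n(g) = ∏_{i=1}^{n} ψ^i(g)^{(-1)^{i-1} · C(n,i)} for all g ∈ G (product in increasing order of i, ψ^i the i-fold composite of ψ, C(n,i) the binomial coefficient); consequently ψ_n is itself an abelian map on G, i.e., ψ_n is a group endomorphism of G and ψ_n(a)·ψ_n(b) = ψ_n(b)·ψ_n(a) for all a, b ∈ G. -/
/-- `aDelta ψ g = g · ψ(g⁻¹)`, the map `δ = 1 - ψ`. -/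
def aDelta {G : Type*} [Group G] (ψ : G → G) (g : G) : G := g * ψ g⁻¹

/-- `aPsi ψ n g = (δⁿ(g))⁻¹ · g`, the map `ψ_n = -(1-ψ)ⁿ + 1` (so `ψ_0 = 0`, `ψ_1 = ψ`). -/
def aPsi {G : Type*} [Group G] (ψ : G → G) (n : ℕ) (g : G) : G :=
  ((aDelta ψ)^[n] g)⁻¹ * g

private lemma listRangeProd {M : Type*} [CommMonoid M] (f : ℕ → M) (n : ℕ) :
    ((List.range n).map f).prod = ∏ i ∈ Finset.range n, f i := by
  induction n with
  | zero => simp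
  | succ n ih => simp [List.range_succ, ih, Finset.prod_range_succ]

/-- For an abelian map ψ and `n ≥ 1`,
`ψ_n(g) = ∏_{i=1}^{n} ψ^i(g)^{(-1)^{i-1} C(n,i)}`, and consequently `ψ_n` is an
abelian map: an endomorphism with commuting values. -/
theorem stmt1 {G : Type*} [Group G] (ψ : G → G)
    (hψ : ∀ a b : G, ψ (a * b) = ψ a * ψ b)
    (hab : ∀ a b : G, ψ a * ψ b = ψ b * ψ a)
    (n : ℕ) (hn : 1 ≤ n) :
    (∀ g : G, aPsi ψ n g =
      (((List.range n).map (fun i =>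
        (ψ^[i + 1] g) ^ ((-1 : ℤ) ^ i * (n.choose (i + 1) : ℤ)))).prod)) ∧
    (∀ a b : G, aPsi ψ n (a * b) = aPsi ψ n a * aPsi ψ n b) ∧
    (∀ a b : G, aPsi ψ n a * aPsi ψ n b = aPsi ψ n b * aPsi ψ n a) := by
  classical
  let φ : G →* G := MonoidHom.mk' ψ hψ
  set K : Subgroup G := φ.range with hK
  letI : CommGroup K := { (inferInstance : Group K) with
    mul_comm := by
      rintro ⟨x, a, rfl⟩ ⟨y, b, rfl⟩
      ext
      exact hab a b }
  have hmem : ∀ (g : G) (i : ℕ), ψ^[i + 1] g ∈ K := fun g i =>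
    ⟨ψ^[i] g, (Function.iterate_succ_apply' ψ i g).symm⟩
  let c : G → ℕ → K := fun g i => ⟨ψ^[i + 1] g, hmem g i⟩
  let ψK : K →* K := (φ.rangeRestrict).comp K.subtype
  have hψK : ∀ x : K, (ψK x : G) = ψ (x : G) := fun x => rfl
  have hc : ∀ (g : G) (i : ℕ), ψK (c g i) = c g (i + 1) := by
    intro g i
    ext
    show ψ (ψ^[i + 1] g) = ψ^[i + 2] g
    exact (Function.iterate_succ_apply' ψ (i + 1) g).symm
  let E : ℕ → ℕ → ℤ := fun m i => (-1) ^ (i + 1) * (m.choose (i + 1) : ℤ)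
  let P : ℕ → G → K := fun m g => ∏ i ∈ Finset.range m, c g i ^ E m i
  have hmain : ∀ (m : ℕ) (g : G), (aDelta ψ)^[m] g = g * ↑(P m g) := by
    intro m
    induction m with
    | zero => intro g; simp [P]
    | succ m ih =>
      intro g
      have key : P m g * (c g 0 * ψK (P m g))⁻¹ = P (m + 1) g := by
        have h1 : c g 0 * ψK (P m g) =
            ∏ i ∈ Finset.range (m + 1), c g i ^ ((-1 : ℤ) ^ i * (m.choose i : ℤ)) := by
          rw [Finset.prod_range_succ']
          rw [mul_comm]
          congr 1
          · rw [map_prod]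
            refine Finset.prod_congr rfl fun i _ => ?_
            rw [map_zpow, hc]
          · simp
        have h2 : P m g = ∏ i ∈ Finset.range (m + 1), c g i ^ E m i := by
          rw [Finset.prod_range_succ]
          have : E m m = 0 := by
            simp [E, Nat.choose_succ_self]
          rw [this, zpow_zero, mul_one]
        rw [h1, h2]
        show _ = ∏ i ∈ Finset.range (m + 1), c g i ^ E (m + 1) i
        rw [← Finset.prod_inv_distrib, ← Finset.prod_mul_distrib]
        refine Finset.prod_congr rfl fun i _ => ?_
        rw [← zpow_neg, ← zpow_add]
        congr 1
        show E m i + -((-1 : ℤ) ^ i * (m.choose i : ℤ)) = E (m + 1) i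
        simp only [E, Nat.choose_succ_succ]
        push_cast
        ring
      rw [Function.iterate_succ_apply', ih g]
      show (g * ↑(P m g)) * ψ ((g * ↑(P m g))⁻¹) = g * ↑(P (m + 1) g)
      have hinv : ψ ((g * ↑(P m g))⁻¹) = (ψ g * ψ (↑(P m g)))⁻¹ := by
        rw [← hψ]
        have : ψ ((g * ↑(P m g))⁻¹) = (ψ (g * ↑(P m g)))⁻¹ := map_inv φ _
        rw [this]
      rw [hinv]
      have hpg : ψ (↑(P m g) : G) = ↑(ψK (P m g)) := rfl
      have hg0 : ψ g = ↑(c g 0) := rfl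
      rw [hpg, hg0, mul_assoc]
      congr 1
      rw [← key]
      push_cast
      rfl
  let Q : G → K := fun g => ∏ i ∈ Finset.range n, c g i ^ ((-1 : ℤ) ^ i * (n.choose (i + 1) : ℤ))
  have hQ : ∀ g : G, (P n g)⁻¹ = Q g := by
    intro g
    rw [← Finset.prod_inv_distrib]
    refine Finset.prod_congr rfl fun i _ => ?_
    rw [← zpow_neg]
    congr 1
    show -E n i = _
    simp only [E]
    push_cast
    ring
  have hA : ∀ g : G, aPsi ψ n g = ↑(Q g) := by
    intro g
    show ((aDelta ψ)^[n] g)⁻¹ * g = _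
    rw [hmain n g, mul_inv_rev, mul_assoc, inv_mul_cancel, mul_one, ← hQ]
    push_cast
    rfl
  have hQmul : ∀ a b : G, Q (a * b) = Q a * Q b := by
    intro a b
    have hiter : ∀ (k : ℕ) (a b : G), ψ^[k] (a * b) = ψ^[k] a * ψ^[k] b := by
      intro k
      induction k with
      | zero => intro a b; simp
      | succ k ihk => intro a b; rw [Function.iterate_succ_apply', ihk, hψ,
          Function.iterate_succ_apply', Function.iterate_succ_apply']
    have hcmul : ∀ i, c (a * b) i = c a i * c b i := by
      intro i
      ext
      exact hiter (i + 1) a b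
    show Q (a * b) = _
    simp only [Q, hcmul, mul_zpow, Finset.prod_mul_distrib]
  refine ⟨?_, ?_, ?_⟩
  · intro g
    rw [hA g]
    have : ((List.range n).map (fun i =>
        (ψ^[i + 1] g) ^ ((-1 : ℤ) ^ i * (n.choose (i + 1) : ℤ)))).prod
        = (↑(((List.range n).map (fun i =>
          c g i ^ ((-1 : ℤ) ^ i * (n.choose (i + 1) : ℤ)))).prod) : G) := by
      rw [SubmonoidClass.coe_list_prod, List.map_map]
      simp [Function.comp_def, Function.iterate_succ_apply]
      rfl
    rw [this, listRangeProd]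
  · intro a b
    rw [hA, hA, hA, hQmul]
    push_cast
    rfl
  · intro a b
    rw [hA, hA]
    have h := congrArg (Subtype.val) (mul_comm (Q a) (Q b))
    push_cast at h
    exact h
end

section
/- Let ψ be an abelian map on a group G and n ≥ 0. If the operation ∘_n is commutative (g ∘_n h = h ∘_n g for all g, h ∈ G), then ∘_{n+1} coincides with ∘_n; consequently g ∘_m h = g ∘_n h for all g, h ∈ G and all m ≥ n. -/
/-- `g ∘_n h = g · ψ_n(g⁻¹) · h · ψ_n(g)`. -/
def aCirc {G : Type*} [Group G] (ψ : G → G) (n : ℕ) (g h : G) : G :=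
  g * aPsi ψ n g⁻¹ * h * aPsi ψ n g

section Aux
variable {G : Type*} [Group G] {ψ : G → G}
variable (hψ : ∀ a b : G, ψ (a * b) = ψ a * ψ b)
variable (hab : ∀ a b : G, ψ a * ψ b = ψ b * ψ a)
include hψ hab

lemma psi_inv (a : G) : ψ a⁻¹ = (ψ a)⁻¹ := by
  have h1 : ψ (1 : G) = 1 := by
    have := hψ 1 1; simpa using this.symm
  have := hψ a⁻¹ a
  rw [inv_mul_cancel, h1] at this
  exact eq_inv_of_mul_eq_one_left this.symm

lemma delta_eq (g : G) : aDelta ψ g = g * (ψ g)⁻¹ := by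
  rw [aDelta, psi_inv hψ hab]

/-- `ψ_{n+1}(g) = ψ(δⁿ g) · ψ_n(g)` -/
lemma psi_succ (n : ℕ) (g : G) :
    aPsi ψ (n + 1) g = ψ ((aDelta ψ)^[n] g) * aPsi ψ n g := by
  rw [aPsi, aPsi, Function.iterate_succ_apply', delta_eq hψ hab, mul_inv_rev, inv_inv, mul_assoc]

/-- `ψ(δⁿ(g⁻¹)) = ψ(δⁿ g)⁻¹` -/
lemma psi_d_inv (n : ℕ) (g : G) :
    ψ ((aDelta ψ)^[n] g⁻¹) = (ψ ((aDelta ψ)^[n] g))⁻¹ := by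
  induction n with
  | zero => simpa using psi_inv hψ hab g
  | succ n ih =>
      rw [Function.iterate_succ_apply', Function.iterate_succ_apply',
        delta_eq hψ hab, delta_eq hψ hab, hψ, hψ, ih, psi_inv hψ hab, psi_inv hψ hab,
        inv_inv, mul_inv_rev, inv_inv]
      exact (show Commute (ψ ((aDelta ψ)^[n] g)) (ψ (ψ ((aDelta ψ)^[n] g))) from
        hab _ _).inv_left.eq

/-- Every `ψ`-value commutes with every `ψ_n`-value. -/
lemma commute_psi_p (n : ℕ) (x g : G) : Commute (ψ x) (aPsi ψ n g) := by
  induction n with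
  | zero => simp [aPsi]
  | succ n ih => exact (psi_succ hψ hab n g) ▸ (Commute.mul_right (hab x _) ih)

/-- `ψ_n`-values commute with each other. -/
lemma p_comm (n : ℕ) (g h : G) : Commute (aPsi ψ n g) (aPsi ψ n h) := by
  induction n with
  | zero => simp [aPsi]
  | succ n ih =>
      rw [psi_succ hψ hab n g, psi_succ hψ hab n h]
      exact Commute.mul_left (Commute.mul_right (hab _ _) (commute_psi_p hψ hab n _ h))
        (Commute.mul_right ((commute_psi_p hψ hab n _ g).symm) ih)

/-- `ψ_n(g⁻¹) = ψ_n(g)⁻¹` -/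
lemma p_inv (n : ℕ) (g : G) : aPsi ψ n g⁻¹ = (aPsi ψ n g)⁻¹ := by
  induction n with
  | zero => simp [aPsi]
  | succ n ih =>
      rw [psi_succ hψ hab n g⁻¹, psi_succ hψ hab n g, psi_d_inv hψ hab, ih, mul_inv_rev,
        (commute_psi_p hψ hab n _ g).inv_inv.eq]

/-- `g ∘_n h = δⁿ(g) · h · ψ_n(g)` -/
lemma circ_eq (n : ℕ) (g h : G) :
    aCirc ψ n g h = (aDelta ψ)^[n] g * h * aPsi ψ n g := by
  rw [aCirc, p_inv hψ hab, aPsi, mul_inv_rev, inv_inv]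
  group

/-- Commutativity of `∘_n` implies `δⁿ`-values commute. -/
lemma d_comm (n : ℕ) (hcomm : ∀ g h : G, aCirc ψ n g h = aCirc ψ n h g) (g h : G) :
    Commute ((aDelta ψ)^[n] g) ((aDelta ψ)^[n] h) := by
  have e := hcomm g h
  rw [circ_eq hψ hab, circ_eq hψ hab] at e
  have hg : g = (aDelta ψ)^[n] g * aPsi ψ n g := by rw [aPsi]; group
  have hh : h = (aDelta ψ)^[n] h * aPsi ψ n h := by rw [aPsi]; group
  have key : (aDelta ψ)^[n] g * (aDelta ψ)^[n] h * (aPsi ψ n g * aPsi ψ n h)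
      = (aDelta ψ)^[n] h * (aDelta ψ)^[n] g * (aPsi ψ n g * aPsi ψ n h) := by
    calc (aDelta ψ)^[n] g * (aDelta ψ)^[n] h * (aPsi ψ n g * aPsi ψ n h)
        = (aDelta ψ)^[n] g * (aDelta ψ)^[n] h * (aPsi ψ n h * aPsi ψ n g) := by
          rw [(p_comm hψ hab n g h).eq]
      _ = (aDelta ψ)^[n] g * ((aDelta ψ)^[n] h * aPsi ψ n h) * aPsi ψ n g := by group
      _ = (aDelta ψ)^[n] g * h * aPsi ψ n g := by rw [← hh]
      _ = (aDelta ψ)^[n] h * g * aPsi ψ n h := e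
      _ = (aDelta ψ)^[n] h * ((aDelta ψ)^[n] g * aPsi ψ n g) * aPsi ψ n h := by rw [← hg]
      _ = (aDelta ψ)^[n] h * (aDelta ψ)^[n] g * (aPsi ψ n g * aPsi ψ n h) := by group
  exact mul_right_cancel key

/-- If `∘_n` is commutative, `ψ(δⁿ g)` is central. -/
lemma psi_d_central (n : ℕ) (hcomm : ∀ g h : G, aCirc ψ n g h = aCirc ψ n h g) (g x : G) :
    Commute (ψ ((aDelta ψ)^[n] g)) x := by
  set dg := (aDelta ψ)^[n] g with hdg
  have h1 : Commute (ψ dg) ((aDelta ψ)^[n] x) := by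
    have h2 := d_comm hψ hab n hcomm (aDelta ψ g) x
    rw [← Function.iterate_succ_apply, Function.iterate_succ_apply', delta_eq hψ hab, ← hdg] at h2
    have h3 := d_comm hψ hab n hcomm g x
    rw [← hdg] at h3
    have h5 : Commute (dg⁻¹ * (dg * (ψ dg)⁻¹)) ((aDelta ψ)^[n] x) :=
      Commute.mul_left h3.inv_left h2
    rw [inv_mul_cancel_left] at h5
    simpa using h5.inv_left
  have h4 : Commute (ψ dg) (aPsi ψ n x) := commute_psi_p hψ hab n dg x
  have hx : x = (aDelta ψ)^[n] x * aPsi ψ n x := by simp [aPsi]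
  rw [hx]
  exact h1.mul_right h4

/-- If `∘_n` is commutative then `∘_{n+1} = ∘_n`. -/
lemma circ_succ_eq (n : ℕ) (hcomm : ∀ g h : G, aCirc ψ n g h = aCirc ψ n h g) (g h : G) :
    aCirc ψ (n + 1) g h = aCirc ψ n g h := by
  rw [circ_eq hψ hab, circ_eq hψ hab, psi_succ hψ hab, Function.iterate_succ_apply',
    delta_eq hψ hab]
  have hc := psi_d_central hψ hab n hcomm g h
  calc (aDelta ψ)^[n] g * (ψ ((aDelta ψ)^[n] g))⁻¹ * h *
        (ψ ((aDelta ψ)^[n] g) * aPsi ψ n g)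
      = (aDelta ψ)^[n] g * (ψ ((aDelta ψ)^[n] g))⁻¹ * (h * ψ ((aDelta ψ)^[n] g)) *
        aPsi ψ n g := by group
    _ = (aDelta ψ)^[n] g * (ψ ((aDelta ψ)^[n] g))⁻¹ * (ψ ((aDelta ψ)^[n] g) * h) *
        aPsi ψ n g := by rw [← hc.eq]
    _ = (aDelta ψ)^[n] g * h * aPsi ψ n g := by group

end Aux

/-- If `∘_n` is commutative then `∘_{n+1} = ∘_n`, hence, `∘_m = ∘_n` for all `m ≥ n`. -/
theorem stmt8 {G : Type*} [Group G] (ψ : G → G)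
    (hψ : ∀ a b : G, ψ (a * b) = ψ a * ψ b)
    (hab : ∀ a b : G, ψ a * ψ b = ψ b * ψ a)
    (n : ℕ) (hcomm : ∀ g h : G, aCirc ψ n g h = aCirc ψ n h g) :
    (∀ g h : G, aCirc ψ (n + 1) g h = aCirc ψ n g h) ∧
    (∀ m : ℕ, n ≤ m → ∀ g h : G, aCirc ψ m g h = aCirc ψ n g h) := by
  constructor
  · exact circ_succ_eq hψ hab n hcomm
  · intro m hm
    induction m with
    | zero => obtain rfl : n = 0 := Nat.le_zero.mp hm; intro g h; rfl
    | succ m ih =>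
        rcases Nat.lt_or_ge n (m+1) with h' | h'
        · have hnm : n ≤ m := Nat.lt_succ_iff.mp h'
          have hm' := ih hnm
          have hcomm' : ∀ g h : G, aCirc ψ m g h = aCirc ψ m h g := by
            intro g h; rw [hm', hm', hcomm]
          intro g h
          rw [circ_succ_eq hψ hab m hcomm', hm']
        · obtain rfl : n = m + 1 := le_antisymm hm h'
          intro g h; rfl
end

section
/- Let ψ be an abelian map on a group G. For all m, n ≥ 0, the triple (G, ∘_m, ∘_n) is a skew left brace; that is, the brace relation g ∘_n (h ∘_m k) = (g ∘_n h) ∘_m g̃ ∘_m (g ∘_n k) holds for all g, h, k ∈ G, where g̃ = ψ_m(g)·g⁻¹·ψ_m(g⁻¹) is the inverse of g in the group (G, ∘_m). -/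
section AMhelpers

variable {G : Type*} [Group G] {ψ : G → G}

private lemma am_conj {x y : G} (h : x * y = y * x) : x⁻¹ * y * x = y := by
  rw [mul_assoc, ← h, ← mul_assoc, inv_mul_cancel, one_mul]

private lemma am_conj' {x y : G} (h : x * y = y * x) : x * y * x⁻¹ = y := by
  rw [h, mul_assoc, mul_inv_cancel, mul_one]

private lemma am_psi_one (hψ : ∀ a b : G, ψ (a * b) = ψ a * ψ b) : ψ 1 = 1 := by
  have h := hψ 1 1
  rw [one_mul] at h
  exact mul_right_cancel (a := ψ 1) (by rw [one_mul, ← h])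

private lemma am_psi_inv (hψ : ∀ a b : G, ψ (a * b) = ψ a * ψ b) (g : G) :
    ψ g⁻¹ = (ψ g)⁻¹ :=
  eq_inv_of_mul_eq_one_left (by rw [← hψ, inv_mul_cancel, am_psi_one hψ])

/-- Any two elements of the subgroup generated by the range of an abelian map commute. -/
private lemma am_S_comm (hab : ∀ a b : G, ψ a * ψ b = ψ b * ψ a)
    {x y : G} (hx : x ∈ Subgroup.closure (Set.range ψ))
    (hy : y ∈ Subgroup.closure (Set.range ψ)) : x * y = y * x := by
  have h1 : Subgroup.closure (Set.range ψ) ≤ Subgroup.centralizer (Set.range ψ) := by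
    rw [Subgroup.closure_le]
    rintro a ⟨u, rfl⟩
    rw [SetLike.mem_coe, Subgroup.mem_centralizer_iff]
    rintro b ⟨v, rfl⟩
    exact hab v u
  have h2 : Subgroup.closure (Set.range ψ) ≤
      Subgroup.centralizer (Subgroup.closure (Set.range ψ) : Set G) := by
    rw [Subgroup.closure_le]
    rintro a ⟨u, rfl⟩
    rw [SetLike.mem_coe, Subgroup.mem_centralizer_iff]
    intro b hb
    exact (h1 hb (ψ u) ⟨u, rfl⟩).symm
  exact h2 hy x hx

private lemma am_aPsi_zero (g : G) : aPsi ψ 0 g = 1 := by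
  simp [aPsi]

private lemma am_aPsi_succ (hψ : ∀ a b : G, ψ (a * b) = ψ a * ψ b) (n : ℕ) (g : G) :
    aPsi ψ (n + 1) g = ψ g * (ψ (aPsi ψ n g))⁻¹ * aPsi ψ n g := by
  have hd : (aDelta ψ)^[n] g = g * (aPsi ψ n g)⁻¹ := by
    simp only [aPsi]; group
  conv_lhs => rw [aPsi, Function.iterate_succ_apply', aDelta, mul_inv_rev,
    am_psi_inv hψ, inv_inv]
  rw [hd, hψ, am_psi_inv hψ]
  simp only [aPsi]
  group

private lemma am_aPsi_mem (hψ : ∀ a b : G, ψ (a * b) = ψ a * ψ b) (n : ℕ) (g : G) :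
    aPsi ψ n g ∈ Subgroup.closure (Set.range ψ) := by
  induction n with
  | zero => rw [am_aPsi_zero]; exact one_mem _
  | succ n ih =>
      rw [am_aPsi_succ hψ]
      exact mul_mem (mul_mem (Subgroup.subset_closure ⟨g, rfl⟩)
        (inv_mem (Subgroup.subset_closure ⟨_, rfl⟩))) ih

private lemma am_aPsi_hom (hψ : ∀ a b : G, ψ (a * b) = ψ a * ψ b)
    (hab : ∀ a b : G, ψ a * ψ b = ψ b * ψ a) (n : ℕ) (a b : G) :
    aPsi ψ n (a * b) = aPsi ψ n a * aPsi ψ n b := by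
  induction n with
  | zero => rw [am_aPsi_zero, am_aPsi_zero, am_aPsi_zero, one_mul]
  | succ n ih =>
      rw [am_aPsi_succ hψ, am_aPsi_succ hψ, am_aPsi_succ hψ, hψ, ih, hψ, mul_inv_rev]
      set Pa := aPsi ψ n a with hPa
      set Pb := aPsi ψ n b with hPb
      have hr : ∀ x : G, ψ x ∈ Subgroup.closure (Set.range ψ) :=
        fun x => Subgroup.subset_closure ⟨x, rfl⟩
      set u := ψ b
      set v := (ψ Pa)⁻¹ with hv
      set w := (ψ Pb)⁻¹ with hw
      have huS : u ∈ Subgroup.closure (Set.range ψ) := hr b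
      have hvS : v ∈ Subgroup.closure (Set.range ψ) := inv_mem (hr Pa)
      have hwS : w ∈ Subgroup.closure (Set.range ψ) := inv_mem (hr Pb)
      have hxS : Pa ∈ Subgroup.closure (Set.range ψ) := am_aPsi_mem hψ n a
      have key : u * (w * v) * Pa = v * Pa * u * w := by
        calc u * (w * v) * Pa = u * (v * w) * Pa := by rw [am_S_comm hab hwS hvS]
          _ = (u * v) * (w * Pa) := by group
          _ = (v * u) * (Pa * w) := by rw [am_S_comm hab huS hvS, am_S_comm hab hwS hxS]
          _ = v * (u * Pa) * w := by group
          _ = v * (Pa * u) * w := by rw [am_S_comm hab huS hxS]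
          _ = v * Pa * u * w := by group
      calc ψ a * u * (w * v) * (Pa * Pb) = ψ a * (u * (w * v) * Pa) * Pb := by group
        _ = ψ a * (v * Pa * u * w) * Pb := by rw [key]
        _ = ψ a * v * Pa * (u * w * Pb) := by group

private lemma am_aPsi_inv (hψ : ∀ a b : G, ψ (a * b) = ψ a * ψ b)
    (hab : ∀ a b : G, ψ a * ψ b = ψ b * ψ a) (n : ℕ) (g : G) :
    aPsi ψ n g⁻¹ = (aPsi ψ n g)⁻¹ :=
  eq_inv_of_mul_eq_one_left (by
    rw [← am_aPsi_hom hψ hab, inv_mul_cancel]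
    induction n with
    | zero => exact am_aPsi_zero 1
    | succ n ih => rw [am_aPsi_succ hψ, ih, am_psi_one hψ]; group)

end AMhelpers

/-- `(G, ∘_m, ∘_n)` is a skew left brace: the brace relation
`g ∘_n (h ∘_m k) = (g ∘_n h) ∘_m g̃ ∘_m (g ∘_n k)` holds, where
`g̃ = ψ_m(g)·g⁻¹·ψ_m(g⁻¹)` is the `∘_m`-inverse of `g`. -/
theorem stmt9 {G : Type*} [Group G] (ψ : G → G)
    (hψ : ∀ a b : G, ψ (a * b) = ψ a * ψ b)
    (hab : ∀ a b : G, ψ a * ψ b = ψ b * ψ a)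
    (m n : ℕ) (g h k : G) :
    aCirc ψ n g (aCirc ψ m h k) =
      aCirc ψ m (aCirc ψ m (aCirc ψ n g h) (aPsi ψ m g * g⁻¹ * aPsi ψ m g⁻¹))
        (aCirc ψ n g k) := by
  have hom := am_aPsi_hom hψ hab
  have hinv := am_aPsi_inv hψ hab
  have mem := am_aPsi_mem hψ
  have cS := fun {x y : G} hx hy => am_S_comm (ψ := ψ) hab (x := x) (y := y) hx hy
  set a := aPsi ψ n g with ha
  set b := aPsi ψ m h with hb
  set c := aPsi ψ m g with hc
  -- A := g ∘ₙ h
  have hA : aCirc ψ n g h = g * a⁻¹ * h * a := by rw [aCirc, hinv]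
  have hC : aCirc ψ n g k = g * a⁻¹ * k * a := by rw [aCirc, hinv]
  have hK : aCirc ψ m h k = h * b⁻¹ * k * b := by rw [aCirc, hinv]
  -- ψₘ of A
  have hPa : aPsi ψ m a ∈ Subgroup.closure (Set.range ψ) := mem m a
  have hbS : b ∈ Subgroup.closure (Set.range ψ) := mem m h
  have hcS : c ∈ Subgroup.closure (Set.range ψ) := mem m g
  have haS : a ∈ Subgroup.closure (Set.range ψ) := mem n g
  have hPA : aPsi ψ m (g * a⁻¹ * h * a) = c * b := by
    rw [hom, hom, hom, hinv, ← hc, ← hb]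
    calc c * (aPsi ψ m a)⁻¹ * b * aPsi ψ m a
        = c * ((aPsi ψ m a)⁻¹ * b * aPsi ψ m a) := by group
      _ = c * b := by rw [am_conj (cS hPa hbS)]
  -- t := ∘ₘ-inverse of g
  have ht : aPsi ψ m g * g⁻¹ * aPsi ψ m g⁻¹ = c * g⁻¹ * c⁻¹ := by rw [hinv, hc]
  have hPt : aPsi ψ m (c * g⁻¹ * c⁻¹) = c⁻¹ := by
    have hPc : aPsi ψ m c ∈ Subgroup.closure (Set.range ψ) := mem m c
    rw [hom, hom, hinv, hinv, ← hc]
    calc aPsi ψ m c * c⁻¹ * (aPsi ψ m c)⁻¹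
        = aPsi ψ m c * c⁻¹ * (aPsi ψ m c)⁻¹ := rfl
      _ = c⁻¹ := am_conj' (cS hPc (inv_mem hcS))
  -- B := A ∘ₘ t
  have hB : aCirc ψ m (g * a⁻¹ * h * a) (c * g⁻¹ * c⁻¹)
      = g * a⁻¹ * h * a * b⁻¹ * g⁻¹ * b := by
    rw [aCirc, hinv, hPA]
    group
  have hPB : aPsi ψ m (g * a⁻¹ * h * a * b⁻¹ * g⁻¹ * b) = b := by
    have e1 : g * a⁻¹ * h * a * b⁻¹ * g⁻¹ * b
        = (g * a⁻¹ * h * a) * ((c * b)⁻¹ * (c * g⁻¹ * c⁻¹ * (c * b))) := by group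
    have hXS : aPsi ψ m (c * b) ∈ Subgroup.closure (Set.range ψ) := mem m (c * b)
    have h1 := hom m (g * a⁻¹ * h * a) ((c * b)⁻¹ * (c * g⁻¹ * c⁻¹ * (c * b)))
    have h2 := hom m (c * b)⁻¹ (c * g⁻¹ * c⁻¹ * (c * b))
    have h3 := hom m (c * g⁻¹ * c⁻¹) (c * b)
    rw [e1, h1, h2, h3, hPA, hPt, hinv]
    set X := aPsi ψ m (c * b) with hX
    calc c * b * (X⁻¹ * (c⁻¹ * X))
        = c * b * X⁻¹ * (c⁻¹ * X) := by group
      _ = c * b * X⁻¹ * (X * c⁻¹) := by rw [cS (inv_mem hcS) hXS]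
      _ = c * (b * c⁻¹) := by group
      _ = c * (c⁻¹ * b) := by rw [cS hbS (inv_mem hcS)]
      _ = b := by group
  -- now assemble
  have hL : aCirc ψ n g (h * b⁻¹ * k * b) = g * a⁻¹ * (h * b⁻¹ * k * b) * a := by
    rw [aCirc, hinv]
  have hR : aCirc ψ m (g * a⁻¹ * h * a * b⁻¹ * g⁻¹ * b) (g * a⁻¹ * k * a)
      = g * a⁻¹ * h * a * b⁻¹ * g⁻¹ * b * b⁻¹ * (g * a⁻¹ * k * a) * b := by
    rw [aCirc, hinv, hPB]
  rw [hK, hA, hC, ht, hB, hL, hR]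
  -- goal: g * a⁻¹ * (h * b⁻¹ * k * b) * a = (g*a⁻¹*h*a*b⁻¹*g⁻¹*b) * b⁻¹ * (g*a⁻¹*k*a) * b
  have hcomm : a * b = b * a := cS haS hbS
  calc g * a⁻¹ * (h * b⁻¹ * k * b) * a
      = g * a⁻¹ * h * b⁻¹ * k * (b * a) := by group
    _ = g * a⁻¹ * h * b⁻¹ * k * (a * b) := by rw [hcomm]
    _ = g * a⁻¹ * h * (a * b⁻¹ * a⁻¹) * k * (a * b) := by
          rw [show a * b⁻¹ * a⁻¹ = b⁻¹ from am_conj' (Commute.inv_right hcomm)]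
    _ = g * a⁻¹ * h * a * b⁻¹ * g⁻¹ * b * b⁻¹ * (g * a⁻¹ * k * a) * b := by group
end

section
/- Let ψ be an abelian map on a group G. Then the image δ(G) = { g·ψ(g⁻¹) : g ∈ G } is a subgroup of G (in particular, δ(g)·δ(h) = δ(g·ψ(g⁻¹)·h·ψ(g)) for all g, h ∈ G). Moreover, the operation ∘_1 is commutative if and only if δ(G) is abelian, i.e., if and only if (g·ψ(g⁻¹))·(h·ψ(h⁻¹)) = (h·ψ(h⁻¹))·(g·ψ(g⁻¹)) for all g, h ∈ G. -/
lemma psi_one {G : Type*} [Group G] (ψ : G → G)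
    (hψ : ∀ a b : G, ψ (a * b) = ψ a * ψ b) : ψ 1 = 1 := by
  have h := hψ 1 1
  rw [one_mul] at h
  have h2 : ψ 1 * 1 = ψ 1 * ψ 1 := by rw [mul_one, ← h]
  exact (mul_left_cancel h2).symm

lemma psi_inv_s12 {G : Type*} [Group G] (ψ : G → G)
    (hψ : ∀ a b : G, ψ (a * b) = ψ a * ψ b) (x : G) : ψ x⁻¹ = (ψ x)⁻¹ :=
  eq_inv_of_mul_eq_one_left (by rw [← hψ, inv_mul_cancel, psi_one ψ hψ])

lemma psi_of_arg {G : Type*} [Group G] (ψ : G → G)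
    (hψ : ∀ a b : G, ψ (a * b) = ψ a * ψ b)
    (hab : ∀ a b : G, ψ a * ψ b = ψ b * ψ a) (g h : G) :
    ψ (g * ψ g⁻¹ * h * ψ g) = ψ g * ψ h := by
  rw [psi_inv_s12 ψ hψ g, hψ, hψ, hψ, psi_inv_s12 ψ hψ (ψ g), mul_assoc, mul_assoc, hab h (ψ g),
    inv_mul_cancel_left]

lemma delta_mul {G : Type*} [Group G] (ψ : G → G)
    (hψ : ∀ a b : G, ψ (a * b) = ψ a * ψ b)
    (hab : ∀ a b : G, ψ a * ψ b = ψ b * ψ a) (g h : G) :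
    aDelta ψ g * aDelta ψ h = aDelta ψ (g * ψ g⁻¹ * h * ψ g) := by
  unfold aDelta
  rw [psi_inv_s12 ψ hψ (g * ψ g⁻¹ * h * ψ g), psi_of_arg ψ hψ hab, mul_inv_rev,
    psi_inv_s12 ψ hψ g, psi_inv_s12 ψ hψ h]
  have e2 : ψ g * (ψ h)⁻¹ = (ψ h)⁻¹ * ψ g :=
    (Commute.inv_right (hab g h : Commute (ψ g) (ψ h))).eq
  simp only [mul_assoc]
  rw [← mul_assoc (ψ g) (ψ h)⁻¹ (ψ g)⁻¹, e2, mul_assoc, mul_inv_cancel, mul_one]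

lemma psi1_eq {G : Type*} [Group G] (ψ : G → G)
    (hψ : ∀ a b : G, ψ (a * b) = ψ a * ψ b) (x : G) : aPsi ψ 1 x = ψ x := by
  unfold aPsi aDelta
  rw [Function.iterate_one, psi_inv_s12 ψ hψ x]
  group

lemma circ_eq_s12 {G : Type*} [Group G] (ψ : G → G)
    (hψ : ∀ a b : G, ψ (a * b) = ψ a * ψ b) (g h : G) :
    aCirc ψ 1 g h = (g * ψ g⁻¹) * (h * ψ h⁻¹) * (ψ h * ψ g) := by
  unfold aCirc
  rw [psi1_eq ψ hψ, psi1_eq ψ hψ, psi_inv_s12 ψ hψ g, psi_inv_s12 ψ hψ h]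
  group

/-- For an abelian map ψ: `δ(G)` is a subgroup of `G`, with
`δ(g)·δ(h) = δ(g·ψ(g⁻¹)·h·ψ(g))`, and `∘_1` is commutative if and only if
`δ(G)` is abelian. -/
theorem stmt12 {G : Type*} [Group G] (ψ : G → G)
    (hψ : ∀ a b : G, ψ (a * b) = ψ a * ψ b)
    (hab : ∀ a b : G, ψ a * ψ b = ψ b * ψ a) :
    (∃ H : Subgroup G, (H : Set G) = Set.range (aDelta ψ)) ∧
    (∀ g h : G, aDelta ψ g * aDelta ψ h = aDelta ψ (g * ψ g⁻¹ * h * ψ g)) ∧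
    ((∀ g h : G, aCirc ψ 1 g h = aCirc ψ 1 h g) ↔
      (∀ g h : G, (g * ψ g⁻¹) * (h * ψ h⁻¹) = (h * ψ h⁻¹) * (g * ψ g⁻¹))) := by
  refine ⟨?_, delta_mul ψ hψ hab, ?_⟩
  · have hmul : ∀ a b : G, a ∈ Set.range (aDelta ψ) → b ∈ Set.range (aDelta ψ) →
        a * b ∈ Set.range (aDelta ψ) := by
      rintro a b ⟨g, rfl⟩ ⟨h, rfl⟩
      exact ⟨_, (delta_mul ψ hψ hab g h).symm⟩
    have hone : (1 : G) ∈ Set.range (aDelta ψ) := ⟨1, by simp [aDelta, psi_one ψ hψ]⟩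
    have hinv : ∀ a : G, a ∈ Set.range (aDelta ψ) → a⁻¹ ∈ Set.range (aDelta ψ) := by
      rintro a ⟨g, rfl⟩
      refine ⟨ψ g * g⁻¹ * (ψ g)⁻¹, ?_⟩
      have key := delta_mul ψ hψ hab g (ψ g * g⁻¹ * (ψ g)⁻¹)
      have harg : g * ψ g⁻¹ * (ψ g * g⁻¹ * (ψ g)⁻¹) * ψ g = 1 := by
        rw [psi_inv_s12 ψ hψ g]; group
      rw [harg] at key
      have h1 : aDelta ψ (1 : G) = 1 := by simp [aDelta, psi_one ψ hψ]
      rw [h1] at key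
      exact eq_inv_of_mul_eq_one_right key
    exact ⟨{ carrier := Set.range (aDelta ψ),
             mul_mem' := fun ha hb => hmul _ _ ha hb,
             one_mem' := hone,
             inv_mem' := fun ha => hinv _ ha }, rfl⟩
  · constructor
    · intro H g h
      have := H g h
      rw [circ_eq_s12 ψ hψ g h, circ_eq_s12 ψ hψ h g, hab g h] at this
      exact mul_right_cancel this
    · intro H g h
      rw [circ_eq_s12 ψ hψ g h, circ_eq_s12 ψ hψ h g, H g h, hab g h]
end
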